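/- (Merged-spine identity underlying SLD-Merge.) Let e* be the lower-rank edge among e1* and e2*; then e* is the minimum-rank edge incident to v in G, and spine(e*) computed in G equals, as a set, the union spine1(e1*) ∪ spine2(e2*). -/

import Mathlib

/- Single tree setting: `G` is a finite tree with injective edge ranks `r`.
`edgesBetween G e f` is the set of edges strictly between edges `e` and `f`
on the unique tree path connecting them (an edge `g ∉ {e,f}` lies on this path
iff it belongs to every walk containing both `e` and `f`). -/

open SimpleGraph

variable {V : Type*}

/-- The set of edges lying strictly between edges `e` and `f` on the tree path
connecting them (excluding `e` and `f`). -/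
def edgesBetween (G : SimpleGraph V) (e f : Sym2 V) : Set (Sym2 V) :=
  {g | g ∈ G.edgeSet ∧ g ≠ e ∧ g ≠ f ∧
    ∀ (a b : V) (w : G.Walk a b), e ∈ w.edges → f ∈ w.edges → g ∈ w.edges}

/-- `f` is an adjacent superior of `e`: `r e < r f` and every edge `g` on the
path between `e` and `f` satisfies `r g < r e`. -/
def AdjSup (G : SimpleGraph V) (r : Sym2 V → ℕ) (e f : Sym2 V) : Prop :=
  f ∈ G.edgeSet ∧ r e < r f ∧ ∀ g ∈ edgesBetween G e f, r g < r e

/-- `f` is an adjacent inferior of `e`: `r f < r e` and every edge `g` on the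
path between `e` and `f` satisfies `r g < r e`. -/
def AdjInf (G : SimpleGraph V) (r : Sym2 V → ℕ) (e f : Sym2 V) : Prop :=
  f ∈ G.edgeSet ∧ r f < r e ∧ ∀ g ∈ edgesBetween G e f, r g < r e

/-- `f` is the SLD parent of `e`: the minimum-rank adjacent superior of `e`. -/
def IsParent (G : SimpleGraph V) (r : Sym2 V → ℕ) (e f : Sym2 V) : Prop :=
  AdjSup G r e f ∧ ∀ g, AdjSup G r e g → r f ≤ r g

/-- The spine of `e`: the set of edges obtained by iterating the SLD parent
function starting from `e` (including `e` itself). -/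
def spine (G : SimpleGraph V) (r : Sym2 V → ℕ) (e : Sym2 V) : Set (Sym2 V) :=
  {f | Relation.ReflTransGen (IsParent G r) e f}

/- Merge setting: `G1` and `G2` are finite trees (on their supports) over a
common ambient vertex type, sharing exactly the vertex `v` and no edges, so
`G1 ⊔ G2` is a tree. A single injective rank function `r` is given on the
edges of `G1 ⊔ G2`. `e1s` and `e2s` are the minimum-rank edges incident to
`v` in `G1` and `G2` respectively. -/

set_option linter.unusedSectionVars false
set_option maxHeartbeats 1600000

namespace SLDMerge
open SimpleGraph Walk

variable {V : Type*} [DecidableEq V]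


def Bv (G : SimpleGraph V) (v : V) (f : Sym2 V) : Set (Sym2 V) :=
  {g | g ∈ G.edgeSet ∧ g ≠ f ∧
    ∀ (a b : V) (w : G.Walk a b), v ∈ w.support → f ∈ w.edges → g ∈ w.edges}

lemma not_mem_Bv {G : SimpleGraph V} {v : V} {f g : Sym2 V} (hgE : g ∈ G.edgeSet)
    (hgf : g ≠ f) (hg : g ∉ Bv G v f) :
    ∃ (a b : V) (w : G.Walk a b), v ∈ w.support ∧ f ∈ w.edges ∧ g ∉ w.edges := by
  by_contra h; push_neg at h
  exact hg ⟨hgE, hgf, fun a b w hv hf => h a b w hv hf⟩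

lemma not_mem_between {G : SimpleGraph V} {x y g : Sym2 V} (hgE : g ∈ G.edgeSet)
    (hgx : g ≠ x) (hgy : g ≠ y) (hg : g ∉ edgesBetween G x y) :
    ∃ (a b : V) (w : G.Walk a b), x ∈ w.edges ∧ y ∈ w.edges ∧ g ∉ w.edges := by
  by_contra h; push_neg at h
  exact hg ⟨hgE, hgx, hgy, fun a b w hx hy => h a b w hx hy⟩

lemma mem_support_of_edge {G : SimpleGraph V} {a b : V} {w : G.Walk a b} {x : Sym2 V}
    (hx : x ∈ w.edges) {c : V} (hc : c ∈ x) : c ∈ w.support := by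
  revert hx hc
  induction x using Sym2.ind with
  | _ u u' =>
    intro hx hc
    rcases Sym2.mem_iff.1 hc with rfl | rfl
    · exact w.fst_mem_support_of_mem_edges hx
    · exact w.snd_mem_support_of_mem_edges hx

lemma exists_cover {G : SimpleGraph V} {a b p : V} (w : G.Walk a b) (hp : p ∈ w.support) :
    ∃ C : G.Walk p a,
      (∀ e, e ∈ C.edges ↔ e ∈ w.edges) ∧ (∀ x, x ∈ C.support ↔ x ∈ w.support) := by
  refine ⟨((w.dropUntil p hp).append (w.dropUntil p hp).reverse).append
      (w.takeUntil p hp).reverse, fun e => ?_, fun x => ?_⟩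
  · conv_rhs => rw [← w.take_spec hp]
    simp only [edges_append, edges_reverse, List.mem_append, List.mem_reverse]
    tauto
  · conv_rhs => rw [← w.take_spec hp]
    simp only [mem_support_append_iff, support_reverse, List.mem_reverse]
    tauto

lemma exists_splice {G : SimpleGraph V} {a1 b1 a2 b2 p : V} (w1 : G.Walk a1 b1)
    (w2 : G.Walk a2 b2) (h1 : p ∈ w1.support) (h2 : p ∈ w2.support) :
    ∃ W : G.Walk a1 a2, (∀ e, e ∈ W.edges ↔ e ∈ w1.edges ∨ e ∈ w2.edges) ∧
      (∀ x, x ∈ W.support ↔ x ∈ w1.support ∨ x ∈ w2.support) := by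
  obtain ⟨C1, hc1e, hc1s⟩ := exists_cover w1 h1
  obtain ⟨C2, hc2e, hc2s⟩ := exists_cover w2 h2
  refine ⟨C1.reverse.append C2, fun e => ?_, fun x => ?_⟩
  · simp [edges_append, edges_reverse, List.mem_reverse, hc1e, hc2e]
  · simp [mem_support_append_iff, support_reverse, List.mem_reverse, hc1s, hc2s]

/-- (2c): `Bv v y ⊆ Bv v x ∪ {x} ∪ between x y`. -/
lemma Bv_subset_step {G : SimpleGraph V} {v : V} {x y : Sym2 V} :
    Bv G v y ⊆ Bv G v x ∪ {x} ∪ edgesBetween G x y := by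
  intro g hg
  obtain ⟨hgE, hgy, hguniv⟩ := hg
  by_contra hcon
  simp only [Set.mem_union, Set.mem_singleton_iff, not_or] at hcon
  obtain ⟨⟨h1, h2⟩, h3⟩ := hcon
  obtain ⟨a1, b1, w1, hv1, hx1, hng1⟩ := not_mem_Bv hgE h2 h1
  obtain ⟨a2, b2, w2, hx2, hy2, hng2⟩ := not_mem_between hgE h2 hgy h3
  have hc1 : x.out.1 ∈ w1.support := mem_support_of_edge hx1 (Sym2.out_fst_mem x)
  have hc2 : x.out.1 ∈ w2.support := mem_support_of_edge hx2 (Sym2.out_fst_mem x)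
  obtain ⟨W, hWe, hWs⟩ := exists_splice w1 w2 hc1 hc2
  have : g ∈ W.edges := hguniv _ _ W ((hWs v).2 (Or.inl hv1)) ((hWe y).2 (Or.inr hy2))
  rcases (hWe g).1 this with h | h
  · exact hng1 h
  · exact hng2 h

/-- (2b): `between g f ⊆ Bv v g ∪ Bv v f`. -/
lemma between_subset_Bv {G : SimpleGraph V} {v : V} {x y : Sym2 V} :
    edgesBetween G x y ⊆ Bv G v x ∪ Bv G v y := by
  intro g hg
  obtain ⟨hgE, hgx, hgy, hguniv⟩ := hg
  by_contra hcon
  simp only [Set.mem_union, not_or] at hcon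
  obtain ⟨h1, h2⟩ := hcon
  obtain ⟨a1, b1, w1, hv1, hx1, hng1⟩ := not_mem_Bv hgE hgx h1
  obtain ⟨a2, b2, w2, hv2, hy2, hng2⟩ := not_mem_Bv hgE hgy h2
  obtain ⟨W, hWe, hWs⟩ := exists_splice w1 w2 hv1 hv2
  have : g ∈ W.edges := hguniv _ _ W ((hWe x).2 (Or.inl hx1)) ((hWe y).2 (Or.inr hy2))
  rcases (hWe g).1 this with h | h
  · exact hng1 h
  · exact hng2 h

/-- base: if `v ∈ e` then nothing lies strictly between `v` and `e`. -/
lemma Bv_eq_empty {G : SimpleGraph V} {v : V} {e : Sym2 V} (heE : e ∈ G.edgeSet)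
    (hve : v ∈ e) : Bv G v e = ∅ := by
  ext g
  simp only [Set.mem_empty_iff_false, iff_false]
  rintro ⟨hgE, hge, hguniv⟩
  obtain ⟨u, rfl⟩ : ∃ u, e = s(v, u) := ⟨Sym2.Mem.other hve, (Sym2.other_spec hve).symm⟩
  have hadj : G.Adj v u := heE
  have := hguniv v u (Walk.cons hadj Walk.nil) (by simp) (by simp)
  simp at this
  exact hge this

/-- canonical-path property at an edge -/
def CanonAt (G : SimpleGraph V) (v : V) (f : Sym2 V) : Prop :=
  ∃ (x y : V) (p : G.Walk v x) (h : G.Adj x y),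
    (p.concat h).IsPath ∧ f = s(x, y) ∧
    ∀ (a c : V) (w : G.Walk a c), v ∈ w.support → f ∈ w.edges →
      ∀ g ∈ (p.concat h).edges, g ∈ w.edges

def Canon (G : SimpleGraph V) (v : V) : Prop := ∀ f ∈ G.edgeSet, CanonAt G v f

def Q (G : SimpleGraph V) (r : Sym2 V → ℕ) (v : V) : Set (Sym2 V) :=
  {f | f ∈ G.edgeSet ∧ ∀ g ∈ Bv G v f, r g < r f}

lemma min_mem_Q {G : SimpleGraph V} {r : Sym2 V → ℕ} {v : V} {e : Sym2 V}
    (heE : e ∈ G.edgeSet) (hve : v ∈ e) : e ∈ Q G r v :=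
  ⟨heE, by rw [Bv_eq_empty heE hve]; simp⟩

lemma spine_subset_Q {G : SimpleGraph V} {r : Sym2 V → ℕ} {v : V} {e : Sym2 V}
    (heE : e ∈ G.edgeSet) (hve : v ∈ e) :
    spine G r e ⊆ Q G r v := by
  intro f hf
  induction hf with
  | refl => exact min_mem_Q heE hve
  | tail _hxy hstep ih =>
    obtain ⟨⟨hyE, hxy, hbet⟩, _⟩ := hstep
    refine ⟨hyE, fun g hg => ?_⟩
    rcases Bv_subset_step (x := _) hg with (h | h) | h
    · exact lt_trans (ih.2 g h) hxy
    · rw [Set.mem_singleton_iff] at h; subst h; exact hxy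
    · exact lt_trans (hbet g h) hxy

lemma Q_subset_spine [Fintype V] {G : SimpleGraph V} {r : Sym2 V → ℕ} {v : V} {e : Sym2 V}
    (hinj : Set.InjOn r G.edgeSet) (hC : Canon G v)
    (heE : e ∈ G.edgeSet) (hve : v ∈ e)
    (hmin : ∀ f ∈ G.edgeSet, v ∈ f → r e ≤ r f) :
    Q G r v ⊆ spine G r e := by
  suffices H : ∀ (n : ℕ) (f : Sym2 V), f ∈ Q G r v → r f = n → f ∈ spine G r e from
    fun f hf => H (r f) f hf rfl
  intro n
  induction n using Nat.strong_induction_on with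
  | _ n IH =>
  intro f hf hrf
  by_cases hfe : f = e
  · subst hfe; exact Relation.ReflTransGen.refl
  obtain ⟨hfE, hfQ⟩ := hf
  obtain ⟨x, y, p, hadj, hP, hfxy, huniv⟩ := hC f hfE
  have hfP : f ∈ (p.concat hadj).edges := by
    rw [hfxy]; simp [Walk.edges_concat]
  have hvP : v ∈ (p.concat hadj).support := (p.concat hadj).start_mem_support
  have hfnp : f ∉ p.edges := by
    have hnd := hP.edges_nodup
    rw [Walk.edges_concat, List.concat_eq_append] at hnd
    rw [hfxy]
    intro hmem
    exact (List.disjoint_of_nodup_append hnd) hmem (by simp)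
  have hBv : Bv G v f = {g | g ∈ (p.concat hadj).edges ∧ g ≠ f} := by
    ext g
    constructor
    · rintro ⟨hgE, hgf, hguniv⟩
      exact ⟨hguniv _ _ _ hvP hfP, hgf⟩
    · rintro ⟨hgP, hgf⟩
      exact ⟨(p.concat hadj).edges_subset_edgeSet hgP, hgf,
        fun a c w hv hf' => huniv a c w hv hf' g hgP⟩
  -- r e < r f
  have hre : r e < r f := by
    by_cases hvf : v ∈ f
    · exact lt_of_le_of_ne (hmin f hfE hvf) fun h => hfe (hinj hfE heE h.symm)
    · by_cases hnil : p.Nil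
      · exfalso
        have hvx : v = x := hnil.eq
        apply hvf
        rw [hfxy, ← hvx]
        exact Sym2.mem_mk_left _ _
      · obtain ⟨z, hadj0, q, rfl⟩ := Walk.not_nil_iff.1 hnil
        have htp : s(v, z) ∈ (Walk.cons hadj0 q).edges := by simp
        have htP : s(v, z) ∈ ((Walk.cons hadj0 q).concat hadj).edges := by
          rw [Walk.edges_concat, List.concat_eq_append]
          exact List.mem_append_left _ htp
        have htf : s(v, z) ≠ f := by
          intro h; exact hvf (h ▸ Sym2.mem_mk_left v z)
        have htBv : s(v, z) ∈ Bv G v f := by rw [hBv]; exact ⟨htP, htf⟩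
        have h1 : r s(v, z) < r f := hfQ _ htBv
        have h2 : r e ≤ r s(v, z) :=
          hmin _ (((Walk.cons hadj0 q).concat hadj).edges_subset_edgeSet htP)
            (Sym2.mem_mk_left v z)
        exact lt_of_le_of_lt h2 h1
  -- maximal element of Qb
  have hQbne : (Q G r v ∩ {g | r g < r f}).Nonempty := ⟨e, min_mem_Q heE hve, hre⟩
  obtain ⟨g0, hg0Qb, hg0max⟩ :=
    Set.exists_max_image (Q G r v ∩ {g | r g < r f}) r (Set.toFinite _) hQbne
  obtain ⟨hg0Q, hg0f⟩ := hg0Qb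
  have hg0E : g0 ∈ G.edgeSet := hg0Q.1
  -- every element of Bv v f is g0 or of smaller rank
  have hBvf : ∀ h' ∈ Bv G v f, h' = g0 ∨ r h' < r g0 := by
    intro h' hh'
    by_cases heq : h' = g0
    · exact Or.inl heq
    right
    obtain ⟨hs, hhsBv, hhsmax⟩ :=
      Set.exists_max_image (Bv G v f) r (Set.toFinite _) ⟨h', hh'⟩
    have hhsE : hs ∈ G.edgeSet := hhsBv.1
    have hhsQ : hs ∈ Q G r v := by
      refine ⟨hhsE, fun k hk => ?_⟩
      have hkne_f : k ≠ f := by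
        intro hkf
        obtain ⟨hkE, hkhs, hkuniv⟩ := hk
        have hhs_p : hs ∈ p.edges := by
          have h1 : hs ∈ (p.concat hadj).edges ∧ hs ≠ f := by
            have h2 := hhsBv
            rw [hBv] at h2
            exact h2
          rw [Walk.edges_concat, List.concat_eq_append, ← hfxy] at h1
          rcases List.mem_append.1 h1.1 with h | h
          · exact h
          · exact absurd (List.mem_singleton.1 h) h1.2
        exact hfnp (hkf ▸ hkuniv v x p p.start_mem_support hhs_p)
      have hkBvf : k ∈ Bv G v f := by
        obtain ⟨hkE, hkhs, hkuniv⟩ := hk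
        exact ⟨hkE, hkne_f, fun a c w hv hf' => hkuniv a c w hv (hhsBv.2.2 a c w hv hf')⟩
      have hk_le : r k ≤ r hs := hhsmax k hkBvf
      exact lt_of_le_of_ne hk_le fun hrr => hk.2.1 (hinj hk.1 hhsE hrr)
    have hhs_lt : r hs < r f := hfQ hs hhsBv
    have h1 : r hs ≤ r g0 := hg0max hs ⟨hhsQ, hhs_lt⟩
    exact lt_of_le_of_ne (le_trans (hhsmax h' hh') h1) fun hrr => heq (hinj hh'.1 hg0E hrr)
  have hg0ltf : r g0 < r f := hg0f
  have hAdj : AdjSup G r g0 f := by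
    refine ⟨hfE, hg0ltf, fun k hk => ?_⟩
    rcases between_subset_Bv (v := v) hk with h | h
    · exact hg0Q.2 k h
    · rcases hBvf k h with rfl | h2
      · exact absurd rfl hk.2.1
      · exact h2
  have hparmin : ∀ k, AdjSup G r g0 k → r f ≤ r k := by
    intro k hkA
    obtain ⟨hkE, hg0k, hbet⟩ := hkA
    have hkQ : k ∈ Q G r v := by
      refine ⟨hkE, fun g hg => ?_⟩
      rcases Bv_subset_step (x := g0) hg with (h | h) | h
      · exact lt_trans (hg0Q.2 g h) hg0k
      · rw [Set.mem_singleton_iff] at h; subst h; exact hg0k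
      · exact lt_trans (hbet g h) hg0k
    by_contra hlt
    push_neg at hlt
    have : r k ≤ r g0 := hg0max k ⟨hkQ, hlt⟩
    exact absurd (lt_of_lt_of_le hg0k this) (lt_irrefl _)
  have hg0spine : g0 ∈ spine G r e := IH (r g0) (hrf ▸ hg0ltf) g0 hg0Q rfl
  exact Relation.ReflTransGen.tail hg0spine ⟨hAdj, hparmin⟩

lemma spine_eq_Q [Fintype V] {G : SimpleGraph V} {r : Sym2 V → ℕ} {v : V} {e : Sym2 V}
    (hinj : Set.InjOn r G.edgeSet) (hC : Canon G v)
    (heE : e ∈ G.edgeSet) (hve : v ∈ e)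
    (hmin : ∀ f ∈ G.edgeSet, v ∈ f → r e ≤ r f) :
    spine G r e = Q G r v :=
  Set.Subset.antisymm (spine_subset_Q heE hve) (Q_subset_spine hinj hC heE hve hmin)



lemma mem_support_of_edge' {G : SimpleGraph V} {a b : V} {w : G.Walk a b} {x : Sym2 V}
    (hx : x ∈ w.edges) {c : V} (hc : c ∈ x) : c ∈ w.support := by
  revert hx hc
  induction x using Sym2.ind with
  | _ u u' =>
    intro hx hc
    rcases Sym2.mem_iff.1 hc with rfl | rfl
    · exact w.fst_mem_support_of_mem_edges hx
    · exact w.snd_mem_support_of_mem_edges hx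

lemma exists_proj {A B C : SimpleGraph V} {v : V}
    (hAB : A.support ∩ B.support ⊆ {v}) :
    ∀ {u b : V} (w : C.Walk u b),
      (∀ e ∈ w.edges, e ∈ A.edgeSet ∨ e ∈ B.edgeSet) →
      ∃ (c d : V) (w' : A.Walk c d),
        (∀ e ∈ w'.edges, e ∈ w.edges) ∧
        (∀ f, f ∈ A.edgeSet → f ∉ B.edgeSet → f ∈ w.edges → f ∈ w'.edges) ∧
        (u ∈ A.support → c = u) ∧ (u ∈ B.support → c = v) ∧
        (b ∈ A.support → d = b) ∧ (b ∈ B.support → d = v) := by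
  intro u b w
  induction w with
  | @nil u =>
    intro _
    by_cases hu : u ∈ A.support
    · exact ⟨u, u, Walk.nil, by simp, by simp, fun _ => rfl,
        fun h2 => (hAB ⟨hu, h2⟩ : _), fun _ => rfl, fun h2 => (hAB ⟨hu, h2⟩ : _)⟩
    · exact ⟨v, v, Walk.nil, by simp, by simp, fun h => absurd h hu, fun _ => rfl,
        fun h => absurd h hu, fun _ => rfl⟩
  | @cons u x b hadj t ih =>
    intro hE
    have he : s(u, x) ∈ A.edgeSet ∨ s(u, x) ∈ B.edgeSet := hE _ (by simp)
    obtain ⟨c, d, w', hsub, hpres, hA1, hB1, hA2, hB2⟩ :=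
      ih (fun e he' => hE e (by simp [he']))
    by_cases hA : s(u, x) ∈ A.edgeSet
    · have hadjA : A.Adj u x := hA
      have huA : u ∈ A.support := ⟨x, hadjA⟩
      have hxA : x ∈ A.support := ⟨u, hadjA.symm⟩
      have hc : c = x := hA1 hxA
      subst hc
      refine ⟨u, d, Walk.cons hadjA w', ?_, ?_, fun _ => rfl, ?_, hA2, hB2⟩
      · intro e he'
        rcases List.mem_cons.1 (by simpa using he') with rfl | h
        · simp
        · simp [hsub e h]
      · intro f hfA hfB hfw
        rcases List.mem_cons.1 (by simpa using hfw) with rfl | h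
        · simp
        · simp [hpres f hfA hfB h]
      · intro huB
        exact (hAB ⟨huA, huB⟩ : u = v) ▸ rfl
    · have hB' : s(u, x) ∈ B.edgeSet := he.resolve_left hA
      have hadjB : B.Adj u x := hB'
      have huB : u ∈ B.support := ⟨x, hadjB⟩
      have hxB : x ∈ B.support := ⟨u, hadjB.symm⟩
      have hc : c = v := hB1 hxB
      refine ⟨c, d, w', fun e he' => by simp [hsub e he'], ?_, ?_, fun _ => hc, hA2, hB2⟩
      · intro f hfA hfB hfw
        rcases List.mem_cons.1 (by simpa using hfw) with rfl | h
        · exact absurd hB' hfB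
        · exact hpres f hfA hfB h
      · intro huA
        exact hc.trans ((hAB ⟨huA, huB⟩ : u = v)).symm

lemma exists_proj_vf {A B C : SimpleGraph V} {v : V}
    (hAB : A.support ∩ B.support ⊆ {v}) (hvA : v ∈ A.support)
    {a c : V} (w : C.Walk a c)
    (hE : ∀ e ∈ w.edges, e ∈ A.edgeSet ∨ e ∈ B.edgeSet)
    (hv : v ∈ w.support) {f : Sym2 V} (hfA : f ∈ A.edgeSet) (hfB : f ∉ B.edgeSet)
    (hfw : f ∈ w.edges) :
    ∃ (c' d' : V) (w' : A.Walk c' d'), v ∈ w'.support ∧ f ∈ w'.edges ∧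
      ∀ e ∈ w'.edges, e ∈ w.edges := by
  have hedges : w.edges = (w.takeUntil v hv).edges ++ (w.dropUntil v hv).edges := by
    conv_lhs => rw [← w.take_spec hv]
    rw [Walk.edges_append]
  rcases List.mem_append.1 (hedges ▸ hfw) with hf1 | hf2
  · obtain ⟨c', d', w', hsub, hpres, _, _, hA2, _⟩ :=
      exists_proj hAB (w.takeUntil v hv)
        (fun e he => hE e (w.edges_takeUntil_subset hv he))
    have hd : d' = v := hA2 hvA
    exact ⟨c', d', w', hd ▸ w'.end_mem_support, hpres f hfA hfB hf1,
      fun e he => w.edges_takeUntil_subset hv (hsub e he)⟩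
  · obtain ⟨c', d', w', hsub, hpres, hA1, _, _, _⟩ :=
      exists_proj hAB (w.dropUntil v hv)
        (fun e he => hE e (w.edges_dropUntil_subset hv he))
    have hc : c' = v := hA1 hvA
    exact ⟨c', d', w', hc ▸ w'.start_mem_support, hpres f hfA hfB hf2,
      fun e he => w.edges_dropUntil_subset hv (hsub e he)⟩

lemma exists_lift {G : SimpleGraph V} {s : Set V} :
    ∀ {a b : V} (w : G.Walk a b), (∀ x ∈ w.support, x ∈ s) → ∀ (ha : a ∈ s) (hb : b ∈ s),
      ∃ w' : (G.induce s).Walk ⟨a, ha⟩ ⟨b, hb⟩,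
        w'.support.map Subtype.val = w.support ∧
        w'.edges.map (Sym2.map Subtype.val) = w.edges := by
  intro a b w
  induction w with
  | nil =>
    intro _ ha hb
    exact ⟨Walk.nil, by simp, by simp⟩
  | @cons a x b hadj t ih =>
    intro hs ha hb
    have hx : x ∈ s := hs _ (by simp)
    obtain ⟨w', h1, h2⟩ := ih (fun y hy => hs y (by simp [hy])) hx hb
    have hadj' : (G.induce s).Adj ⟨a, ha⟩ ⟨x, hx⟩ := hadj
    exact ⟨Walk.cons hadj' w', by simp [h1], by simp [h2, Sym2.map_pair_eq]⟩

lemma support_mem_graph_support {G : SimpleGraph V} :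
    ∀ {a b : V} (w : G.Walk a b) (x : V), x ∈ w.support → x = b ∨ x ∈ G.support := by
  intro a b w
  induction w with
  | nil => intro x hx; left; simpa using hx
  | @cons a y b hadj t ih =>
    intro x hx
    rcases List.mem_cons.1 (by simpa using hx) with rfl | hx'
    · exact Or.inr ⟨_, hadj⟩
    · exact ih x hx'

lemma isAcyclic_of_induce_tree {G : SimpleGraph V} (hT : (G.induce G.support).IsTree) :
    G.IsAcyclic := by
  intro a c hc
  have hne : ¬c.Nil := fun h => hc.ne_nil h.eq_nil
  have ha : a ∈ G.support := by
    obtain ⟨z, hadj, q, hq⟩ := Walk.not_nil_iff.1 hne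
    exact ⟨z, hadj⟩
  have hsup : ∀ x ∈ c.support, x ∈ G.support := fun x hx =>
    (support_mem_graph_support c x hx).elim (fun h => h ▸ ha) id
  obtain ⟨c', h1, h2⟩ := exists_lift c hsup ha ha
  refine hT.IsAcyclic c' ⟨⟨⟨?_⟩, ?_⟩, ?_⟩
  · have hnd := hc.edges_nodup
    rw [← h2] at hnd
    exact hnd.of_map _
  · intro hnil
    have : c'.edges = [] := by rw [hnil]; rfl
    have hce : c.edges = [] := by rw [← h2, this]; rfl
    have : c.length = 0 := by rw [← c.length_edges, hce]; rfl
    exact hc.ne_nil ((Walk.nil_iff_length_eq.2 this).eq_nil)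
  · have hnd := hc.support_nodup
    have : c.support.tail = c'.support.tail.map Subtype.val := by
      rw [← h1, List.map_tail]
    rw [this] at hnd
    exact hnd.of_map _

lemma canonAt_of_path {G : SimpleGraph V} (hac : G.IsAcyclic) {v x y : V}
    (p : G.Walk v x) (h : G.Adj x y) (hP : (p.concat h).IsPath) :
    ∃ (x' y' : V) (p' : G.Walk v x') (h' : G.Adj x' y'),
      (p'.concat h').IsPath ∧ s(x, y) = s(x', y') ∧
      ∀ (a c : V) (w : G.Walk a c), v ∈ w.support → s(x, y) ∈ w.edges →
        ∀ g ∈ (p'.concat h').edges, g ∈ w.edges := by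
  refine ⟨x, y, p, h, hP, rfl, ?_⟩
  intro a c w hvw hfw
  have hyw : y ∈ w.support := mem_support_of_edge' hfw (by simp)
  set W1 := (w.takeUntil v hvw).reverse.append (w.takeUntil y hyw) with hW1
  have hsub : ∀ e ∈ W1.edges, e ∈ w.edges := by
    intro e he
    rw [hW1, Walk.edges_append] at he
    rcases List.mem_append.1 he with h' | h'
    · rw [Walk.edges_reverse, List.mem_reverse] at h'
      exact w.edges_takeUntil_subset hvw h'
    · exact w.edges_takeUntil_subset hyw h'
  have huniq : (⟨p.concat h, hP⟩ : G.Path v y) = ⟨W1.bypass, W1.bypass_isPath⟩ :=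
    hac.path_unique _ _
  intro g hg
  have hg' : g ∈ W1.bypass.edges := by
    have := congrArg (fun P : G.Path v y => (P : G.Walk v y).edges) huniq
    simp only at this
    rw [← this]
    exact hg
  exact hsub g (W1.edges_bypass_subset hg')

lemma canon_of_tree {G : SimpleGraph V} (hT : (G.induce G.support).IsTree)
    {v : V} (hv : v ∈ G.support) : Canon G v := by
  have hac : G.IsAcyclic := isAcyclic_of_induce_tree hT
  intro f
  induction f using Sym2.ind with
  | _ a b =>
  intro hfE
  have hadj : G.Adj a b := hfE
  have ha : a ∈ G.support := ⟨b, hadj⟩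
  obtain ⟨w0⟩ : Nonempty (G.Walk v a) := by
    obtain ⟨p0⟩ := hT.isConnected ⟨v, hv⟩ ⟨a, ha⟩
    exact ⟨p0.map (⟨Subtype.val, fun {x y} h => h⟩ : (G.induce G.support) →g G)⟩
  have hqp : w0.bypass.IsPath := w0.bypass_isPath
  set q := w0.bypass with hqdef
  by_cases hbq : b ∈ q.support
  · -- path from v to b, then edge b-a
    have hq2 : (q.takeUntil b hbq).IsPath := hqp.takeUntil hbq
    have hbna : a ∉ (q.takeUntil b hbq).support := by
      intro hmem
      have hnd := hqp.support_nodup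
      have hadrop : a ∈ (q.dropUntil b hbq).support.tail := by
        have h1 : a ∈ (q.dropUntil b hbq).support := (q.dropUntil b hbq).end_mem_support
        rw [Walk.support_eq_cons] at h1
        rcases List.mem_cons.1 h1 with h2 | h2
        · exact absurd h2 hadj.ne
        · exact h2
      rw [← q.take_spec hbq, Walk.support_append] at hnd
      exact (List.disjoint_of_nodup_append hnd) hmem hadrop
    have hP : ((q.takeUntil b hbq).concat hadj.symm).IsPath := by
      rw [Walk.isPath_def, Walk.support_concat]
      refine List.Nodup.append ((Walk.isPath_def _).1 hq2) (List.nodup_singleton a) ?_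
      intro x hx hx'
      rw [List.mem_singleton] at hx'
      subst hx'
      exact hbna hx
    obtain ⟨x', y', p', h', hP', hfeq, huniv⟩ := canonAt_of_path hac _ hadj.symm hP
    exact ⟨x', y', p', h', hP', (Sym2.eq_swap).trans hfeq, by
      intro a' c' w hvw hfw
      exact huniv a' c' w hvw (Sym2.eq_swap ▸ hfw)⟩
  · have hP : (q.concat hadj).IsPath := by
      rw [Walk.isPath_def, Walk.support_concat]
      refine List.Nodup.append ((Walk.isPath_def _).1 hqp) (List.nodup_singleton b) ?_
      intro x hx hx'
      rw [List.mem_singleton] at hx'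
      subst hx'
      exact hbq hx
    exact canonAt_of_path hac q hadj hP

lemma canonAt_sup_left {A B : SimpleGraph V} {v : V}
    (hAB : A.support ∩ B.support ⊆ {v}) (hvA : v ∈ A.support)
    (hdisj : Disjoint A.edgeSet B.edgeSet)
    {f : Sym2 V} (hfA : f ∈ A.edgeSet) (hCA : CanonAt A v f) :
    CanonAt (A ⊔ B) v f := by
  obtain ⟨x, y, p, h, hP, hfxy, huniv⟩ := hCA
  have hfB : f ∉ B.edgeSet := fun hb => (Set.disjoint_left.1 hdisj) hfA hb
  have hsubE : ∀ e ∈ p.edges, e ∈ (A ⊔ B).edgeSet := fun e he =>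
    edgeSet_mono le_sup_left (p.edges_subset_edgeSet he)
  have h' : (A ⊔ B).Adj x y := (sup_adj A B x y).2 (Or.inl h)
  refine ⟨x, y, p.transfer (A ⊔ B) hsubE, h', ?_, hfxy, ?_⟩
  · rw [Walk.isPath_def, Walk.support_concat, Walk.support_transfer]
    rw [Walk.isPath_def, Walk.support_concat] at hP
    exact hP
  · intro a c w hvw hfw
    have hE : ∀ e ∈ w.edges, e ∈ A.edgeSet ∨ e ∈ B.edgeSet := fun e he => by
      have h1 := w.edges_subset_edgeSet he
      rwa [edgeSet_sup] at h1
    obtain ⟨c', d', w', hvw', hfw', hsub'⟩ :=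
      exists_proj_vf hAB hvA w hE hvw hfA hfB hfw
    intro g hg
    have hg' : g ∈ (p.concat h).edges := by
      rw [Walk.edges_concat] at hg ⊢
      rwa [Walk.edges_transfer] at hg
    exact hsub' g (huniv c' d' w' hvw' hfw' g hg')

lemma Bv_sup_left {A B : SimpleGraph V} {v : V}
    (hAB : A.support ∩ B.support ⊆ {v}) (hvA : v ∈ A.support)
    (hdisj : Disjoint A.edgeSet B.edgeSet)
    {f : Sym2 V} (hfA : f ∈ A.edgeSet) (hCA : CanonAt A v f) :
    Bv (A ⊔ B) v f = Bv A v f := by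
  obtain ⟨x, y, p, h, hP, hfxy, huniv⟩ := hCA
  have hfB : f ∉ B.edgeSet := fun hb => (Set.disjoint_left.1 hdisj) hfA hb
  have hsubE : ∀ e ∈ (p.concat h).edges, e ∈ (A ⊔ B).edgeSet := fun e he =>
    edgeSet_mono le_sup_left ((p.concat h).edges_subset_edgeSet he)
  have hfP : f ∈ (p.concat h).edges := by
    rw [hfxy, Walk.edges_concat, List.concat_eq_append]
    simp
  ext g
  constructor
  · rintro ⟨hgE, hgf, hguniv⟩
    have hgP : g ∈ ((p.concat h).transfer (A ⊔ B) hsubE).edges :=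
      hguniv _ _ _ (by rw [Walk.support_transfer]; exact (p.concat h).start_mem_support)
        (by rw [Walk.edges_transfer]; exact hfP)
    rw [Walk.edges_transfer] at hgP
    have hgA : g ∈ A.edgeSet := (p.concat h).edges_subset_edgeSet hgP
    refine ⟨hgA, hgf, fun a c w hvw hfw => ?_⟩
    have hsubw : ∀ e ∈ w.edges, e ∈ (A ⊔ B).edgeSet := fun e he =>
      edgeSet_mono le_sup_left (w.edges_subset_edgeSet he)
    have h1 := hguniv a c (w.transfer _ hsubw)
      (by rw [Walk.support_transfer]; exact hvw)
      (by rw [Walk.edges_transfer]; exact hfw)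
    rwa [Walk.edges_transfer] at h1
  · rintro ⟨hgA, hgf, hguniv⟩
    refine ⟨edgeSet_mono le_sup_left hgA, hgf, fun a c w hvw hfw => ?_⟩
    have hE : ∀ e ∈ w.edges, e ∈ A.edgeSet ∨ e ∈ B.edgeSet := fun e he => by
      have h1 := w.edges_subset_edgeSet he
      rwa [edgeSet_sup] at h1
    obtain ⟨c', d', w', hvw', hfw', hsubw⟩ :=
      exists_proj_vf hAB hvA w hE hvw hfA hfB hfw
    exact hsubw g (hguniv c' d' w' hvw' hfw')

end SLDMerge
variable [Fintype V] (G1 G2 : SimpleGraph V) (v : V) (r : Sym2 V → ℕ)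
  (e1s e2s : Sym2 V)

/-- Merged-spine identity: if `es` is the lower-rank edge among `e1*` and
`e2*`, then `es` is the minimum-rank edge incident to `v` in `G = G1 ⊔ G2`,
and the spine of `es` in `G` equals `spine1(e1*) ∪ spine2(e2*)` as a set. -/
theorem stmt9
    (h1 : (G1.induce G1.support).IsTree) (h2 : (G2.induce G2.support).IsTree)
    (hne1 : G1.edgeSet.Nonempty) (hne2 : G2.edgeSet.Nonempty)
    (hsupp : G1.support ∩ G2.support = {v})
    (hdisj : Disjoint G1.edgeSet G2.edgeSet)
    (hr : Set.InjOn r (G1 ⊔ G2).edgeSet)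
    (he1 : e1s ∈ G1.edgeSet ∧ v ∈ e1s ∧ ∀ f ∈ G1.edgeSet, v ∈ f → r e1s ≤ r f)
    (he2 : e2s ∈ G2.edgeSet ∧ v ∈ e2s ∧ ∀ f ∈ G2.edgeSet, v ∈ f → r e2s ≤ r f)
    (es : Sym2 V)
    (hes : (es = e1s ∧ r e1s ≤ r e2s) ∨ (es = e2s ∧ r e2s ≤ r e1s)) :
    (es ∈ (G1 ⊔ G2).edgeSet ∧ v ∈ es ∧
      ∀ f ∈ (G1 ⊔ G2).edgeSet, v ∈ f → r es ≤ r f) ∧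
    spine (G1 ⊔ G2) r es = spine G1 r e1s ∪ spine G2 r e2s := by
  classical
  obtain ⟨he1E, hve1, hmin1⟩ := he1
  obtain ⟨he2E, hve2, hmin2⟩ := he2
  have hesE : es ∈ (G1 ⊔ G2).edgeSet := by
    rw [edgeSet_sup]
    rcases hes with ⟨rfl, _⟩ | ⟨rfl, _⟩
    · exact Or.inl he1E
    · exact Or.inr he2E
  have hves : v ∈ es := by
    rcases hes with ⟨rfl, _⟩ | ⟨rfl, _⟩
    · exact hve1
    · exact hve2
  have hminG : ∀ f ∈ (G1 ⊔ G2).edgeSet, v ∈ f → r es ≤ r f := by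
    intro f hf hvf
    rw [edgeSet_sup] at hf
    rcases hes with ⟨rfl, hle⟩ | ⟨rfl, hle⟩ <;> rcases hf with h | h
    · exact hmin1 f h hvf
    · exact le_trans hle (hmin2 f h hvf)
    · exact le_trans hle (hmin1 f h hvf)
    · exact hmin2 f h hvf
  refine ⟨⟨hesE, hves, hminG⟩, ?_⟩
  have hv1 : v ∈ G1.support := by
    obtain ⟨u, hu⟩ : ∃ u, e1s = s(v, u) :=
      ⟨Sym2.Mem.other hve1, (Sym2.other_spec hve1).symm⟩
    rw [hu] at he1E
    exact ⟨u, he1E⟩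
  have hv2 : v ∈ G2.support := by
    obtain ⟨u, hu⟩ : ∃ u, e2s = s(v, u) :=
      ⟨Sym2.Mem.other hve2, (Sym2.other_spec hve2).symm⟩
    rw [hu] at he2E
    exact ⟨u, he2E⟩
  have hAB : G1.support ∩ G2.support ⊆ {v} := hsupp.le
  have hBA : G2.support ∩ G1.support ⊆ {v} := by rw [Set.inter_comm]; exact hAB
  have hdisj' : Disjoint G2.edgeSet G1.edgeSet := hdisj.symm
  have hC1 : SLDMerge.Canon G1 v := SLDMerge.canon_of_tree h1 hv1
  have hC2 : SLDMerge.Canon G2 v := SLDMerge.canon_of_tree h2 hv2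
  have hinj1 : Set.InjOn r G1.edgeSet := hr.mono (by
    rw [edgeSet_sup]; exact Set.subset_union_left)
  have hinj2 : Set.InjOn r G2.edgeSet := hr.mono (by
    rw [edgeSet_sup]; exact Set.subset_union_right)
  have hCG : SLDMerge.Canon (G1 ⊔ G2) v := by
    intro f hf
    rw [edgeSet_sup] at hf
    rcases hf with h | h
    · exact SLDMerge.canonAt_sup_left hAB hv1 hdisj h (hC1 f h)
    · have h2' := SLDMerge.canonAt_sup_left hBA hv2 hdisj' h (hC2 f h)
      rwa [sup_comm G2 G1] at h2'
  have hs1 : spine G1 r e1s = SLDMerge.Q G1 r v :=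
    SLDMerge.spine_eq_Q hinj1 hC1 he1E hve1 hmin1
  have hs2 : spine G2 r e2s = SLDMerge.Q G2 r v :=
    SLDMerge.spine_eq_Q hinj2 hC2 he2E hve2 hmin2
  have hsG : spine (G1 ⊔ G2) r es = SLDMerge.Q (G1 ⊔ G2) r v :=
    SLDMerge.spine_eq_Q hr hCG hesE hves hminG
  have hQ : SLDMerge.Q (G1 ⊔ G2) r v = SLDMerge.Q G1 r v ∪ SLDMerge.Q G2 r v := by
    have hcomm : (G1 ⊔ G2 : SimpleGraph V) = G2 ⊔ G1 := sup_comm G1 G2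
    ext f
    constructor
    · rintro ⟨hfE, hcond⟩
      rw [edgeSet_sup] at hfE
      rcases hfE with h | h
      · left
        refine ⟨h, ?_⟩
        rw [← SLDMerge.Bv_sup_left hAB hv1 hdisj h (hC1 f h)]
        exact hcond
      · right
        refine ⟨h, ?_⟩
        rw [← SLDMerge.Bv_sup_left hBA hv2 hdisj' h (hC2 f h)]
        rw [hcomm] at hcond
        exact hcond
    · rintro (⟨hfE, hcond⟩ | ⟨hfE, hcond⟩)
      · refine ⟨by rw [edgeSet_sup]; exact Or.inl hfE, ?_⟩
        rw [SLDMerge.Bv_sup_left hAB hv1 hdisj hfE (hC1 f hfE)]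
        exact hcond
      · refine ⟨by rw [edgeSet_sup]; exact Or.inr hfE, ?_⟩
        rw [hcomm, SLDMerge.Bv_sup_left hBA hv2 hdisj' hfE (hC2 f hfE)]
        exact hcond
  rw [hsG, hQ, ← hs1, ← hs2]
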